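/- Let 0 ≤ s' < s < 1 and define the 3×3 real matrix U with rows (√((1−s)/(1−s')), −(s−s')/√((1−s')(1+s)), −√((1+s')(s−s')/((1−s')(1+s)))), (0, √((1+s')/(1+s)), −√((s−s')/(1+s))), (√((s−s')/(1−s')), √((1−s)(s−s')/((1+s)(1−s'))), √((1−s)(1+s')/((1−s')(1+s)))). Then U is orthogonal (UᵀU = I). -/

import Mathlib

set_option maxHeartbeats 1000000


theorem stmt16 (s s' : ℝ) (h0 : 0 ≤ s') (h1 : s' < s) (h2 : s < 1) :
    let U : Matrix (Fin 3) (Fin 3) ℝ := !![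
      Real.sqrt ((1-s)/(1-s')), -(s-s')/Real.sqrt ((1-s')*(1+s)),
        -Real.sqrt ((1+s')*(s-s')/((1-s')*(1+s)));
      0, Real.sqrt ((1+s')/(1+s)), -Real.sqrt ((s-s')/(1+s));
      Real.sqrt ((s-s')/(1-s')), Real.sqrt ((1-s)*(s-s')/((1+s)*(1-s'))),
        Real.sqrt ((1-s)*(1+s')/((1-s')*(1+s)))]
    U.transpose * U = 1 := by
  intro U
  have hp : (0:ℝ) < 1 - s := by linarith
  have hq : (0:ℝ) < 1 + s := by linarith
  have hr : (0:ℝ) < 1 - s' := by linarith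
  have ht : (0:ℝ) < 1 + s' := by linarith
  have hc : (0:ℝ) < s - s' := by linarith
  set a := Real.sqrt (1-s) with ha0
  set b := Real.sqrt (1+s) with hb0
  set d := Real.sqrt (1-s') with hd0
  set e := Real.sqrt (1+s') with he0
  set f := Real.sqrt (s-s') with hf0
  have ha : a*a = 1-s := Real.mul_self_sqrt hp.le
  have hb : b*b = 1+s := Real.mul_self_sqrt hq.le
  have hd : d*d = 1-s' := Real.mul_self_sqrt hr.le
  have he : e*e = 1+s' := Real.mul_self_sqrt ht.le
  have hf : f*f = s-s' := Real.mul_self_sqrt hc.le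
  have hapos : 0 < a := Real.sqrt_pos.mpr hp
  have hbpos : 0 < b := Real.sqrt_pos.mpr hq
  have hdpos : 0 < d := Real.sqrt_pos.mpr hr
  have hepos : 0 < e := Real.sqrt_pos.mpr ht
  have hfpos : 0 < f := Real.sqrt_pos.mpr hc
  have key1 : d*d = a*a + f*f := by rw [ha, hd, hf]; ring
  have key2 : b*b = e*e + f*f := by rw [hb, he, hf]; ring
  have hU : U = !![a/d, -(f*f/(d*b)), -(e*f/(d*b));
                   0, e/b, -(f/b);
                   f/d, (a*f)/(b*d), (a*e)/(d*b)] := by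
    have s1 : Real.sqrt ((1-s)/(1-s')) = a/d := by
      rw [Real.sqrt_div hp.le]
    have s2 : Real.sqrt ((1-s')*(1+s)) = d*b := by
      rw [Real.sqrt_mul hr.le]
    have s3 : Real.sqrt ((1+s')*(s-s')/((1-s')*(1+s))) = (e*f)/(d*b) := by
      rw [Real.sqrt_div (by positivity), Real.sqrt_mul ht.le, Real.sqrt_mul hr.le]
    have s4 : Real.sqrt ((1+s')/(1+s)) = e/b := by
      rw [Real.sqrt_div ht.le]
    have s5 : Real.sqrt ((s-s')/(1+s)) = f/b := by
      rw [Real.sqrt_div hc.le]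
    have s6 : Real.sqrt ((s-s')/(1-s')) = f/d := by
      rw [Real.sqrt_div hc.le]
    have s7 : Real.sqrt ((1-s)*(s-s')/((1+s)*(1-s'))) = (a*f)/(b*d) := by
      rw [Real.sqrt_div (by positivity), Real.sqrt_mul hp.le, Real.sqrt_mul hq.le]
    have s8 : Real.sqrt ((1-s)*(1+s')/((1-s')*(1+s))) = (a*e)/(d*b) := by
      rw [Real.sqrt_div (by positivity), Real.sqrt_mul hp.le, Real.sqrt_mul hr.le]
    rw [show U = !![
      Real.sqrt ((1-s)/(1-s')), -(s-s')/Real.sqrt ((1-s')*(1+s)),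
        -Real.sqrt ((1+s')*(s-s')/((1-s')*(1+s)));
      0, Real.sqrt ((1+s')/(1+s)), -Real.sqrt ((s-s')/(1+s));
      Real.sqrt ((s-s')/(1-s')), Real.sqrt ((1-s)*(s-s')/((1+s)*(1-s'))),
        Real.sqrt ((1-s)*(1+s')/((1-s')*(1+s)))] from rfl,
      s1, s2, s3, s4, s5, s6, s7, s8, ← hf, neg_div]
  clear_value a b d e f
  rw [hU]
  ext i j
  fin_cases i <;> fin_cases j <;>
    simp [Matrix.mul_apply, Matrix.transpose_apply, Fin.sum_univ_succ,
      Matrix.one_apply] <;>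
    field_simp
  any_goals ring
  · linear_combination -key1
  · linear_combination (-(f^2))*key1 - (d^2)*key2
  · linear_combination (-(f*e))*key1
  · linear_combination (-(e*f))*key1
  · linear_combination (-(e^2))*key1 - (d^2)*key2
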